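/- For any arrangement of d lines, c̄₁² − 3·c̄₂ = d − Σ_{m≥2} t_m. Consequently, for a nontrivial arrangement, c̄₁² ≤ 3·c̄₂. -/

import Mathlib

open scoped BigOperators

/-- Points and lines of the projective plane over `k` (lines via duality). -/
abbrev ProjPlane (k : Type*) [Field k] := Projectivization k (Fin 3 → k)

/-- Incidence between a point `p` and a line `L` (given by its dual coefficients):
all representatives pair to zero under the standard bilinear form. -/
def Incid {k : Type*} [Field k] (p L : ProjPlane k) : Prop :=
  ∀ v ∈ p.submodule, ∀ w ∈ L.submodule, ∑ i, v i * w i = 0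

/-- Number of lines of the arrangement `A` passing through the point `p`. -/
noncomputable def linesThrough {k : Type*} [Field k]
    (A : Finset (ProjPlane k)) (p : ProjPlane k) : ℕ :=
  {L : ProjPlane k | L ∈ A ∧ Incid p L}.ncard

/-- `tm A m` is the number of `m`-points of the arrangement `A`. -/
noncomputable def tm {k : Type*} [Field k]
    (A : Finset (ProjPlane k)) (m : ℕ) : ℕ :=
  {p : ProjPlane k | linesThrough A p = m}.ncard

/-- The arrangement is trivial if all its lines pass through a common point. -/
def IsTrivial {k : Type*} [Field k] (A : Finset (ProjPlane k)) : Prop :=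
  ∃ p : ProjPlane k, ∀ L ∈ A, Incid p L

/-- First Chern number of a line arrangement. -/
noncomputable def c1sq {k : Type*} [Field k] (A : Finset (ProjPlane k)) : ℤ :=
  9 - 5 * (A.card : ℤ) +
    ∑ m ∈ Finset.Icc 2 A.card, (3 * (m : ℤ) - 4) * (tm A m : ℤ)

/-- Second Chern number of a line arrangement. -/
noncomputable def c2 {k : Type*} [Field k] (A : Finset (ProjPlane k)) : ℤ :=
  3 - 2 * (A.card : ℤ) +
    ∑ m ∈ Finset.Icc 2 A.card, ((m : ℤ) - 1) * (tm A m : ℤ)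

open Projectivization in
lemma incid_iff {k : Type*} [Field k] (p L : ProjPlane k) :
    Incid p L ↔ p.orthogonal L := by
  induction p using Projectivization.ind with | h v hv => ?_
  induction L using Projectivization.ind with | h w hw => ?_
  rw [orthogonal_mk]
  constructor
  · intro h
    exact h v (by rw [submodule_mk]; exact Submodule.mem_span_singleton_self v) w
      (by rw [submodule_mk]; exact Submodule.mem_span_singleton_self w)
  · intro h a ha b hb
    rw [submodule_mk, Submodule.mem_span_singleton] at ha hb
    obtain ⟨c, rfl⟩ := ha; obtain ⟨d, rfl⟩ := hb
    show dotProduct (c • v) (d • w) = 0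
    rw [smul_dotProduct, dotProduct_smul]
    show c • (d • dotProduct v w) = 0
    rw [h]; simp

lemma linesSet_finite {k : Type*} [Field k] (A : Finset (ProjPlane k)) (p : ProjPlane k) :
    {L : ProjPlane k | L ∈ A ∧ Incid p L}.Finite :=
  A.finite_toSet.subset (fun _ h => h.1)

lemma two_le_linesThrough {k : Type*} [Field k] {A : Finset (ProjPlane k)}
    {p L₁ L₂ : ProjPlane k} (h1 : L₁ ∈ A) (h2 : L₂ ∈ A) (hne : L₁ ≠ L₂)
    (hi1 : Incid p L₁) (hi2 : Incid p L₂) : 2 ≤ linesThrough A p := by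
  have := (Set.one_lt_ncard_iff (linesSet_finite A p)).mpr
    ⟨L₁, L₂, ⟨h1, hi1⟩, ⟨h2, hi2⟩, hne⟩
  rw [linesThrough]
  omega

lemma linesThrough_le {k : Type*} [Field k] (A : Finset (ProjPlane k)) (p : ProjPlane k) :
    linesThrough A p ≤ A.card := by
  have h1 : {L : ProjPlane k | L ∈ A ∧ Incid p L} ⊆ (A : Set (ProjPlane k)) := fun L h => h.1
  have := Set.ncard_le_ncard h1 A.finite_toSet
  rw [linesThrough]
  simpa [Set.ncard_coe_finset] using this

open Projectivization Configuration.ofField in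
lemma exists_line_aux {k : Type*} [Field k] (A : Finset (ProjPlane k))
    (hd : 2 ≤ A.card) (hA : ¬ IsTrivial A) {L0 : ProjPlane k} (hL0 : L0 ∈ A) :
    ∃ p, 2 ≤ linesThrough A p ∧ ¬ Incid p L0 := by
  classical
  by_contra hcon
  push_neg at hcon
  obtain ⟨L1, hL1, hne⟩ := A.exists_mem_ne (by omega) L0
  set q := Projectivization.cross L0 L1 with hq
  have hq0 : Incid q L0 := (incid_iff _ _).mpr (cross_orthogonal_left hne.symm)
  have hq1 : Incid q L1 := (incid_iff _ _).mpr (cross_orthogonal_right hne.symm)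
  apply hA
  refine ⟨q, fun L2 hL2 => ?_⟩
  by_cases h0 : L2 = L0
  · subst h0; exact hq0
  by_cases h1 : L2 = L1
  · subst h1; exact hq1
  have hne12 : L1 ≠ L2 := fun e => h1 e.symm
  set q2 := Projectivization.cross L1 L2 with hq2
  have hq21 : Incid q2 L1 := (incid_iff _ _).mpr (cross_orthogonal_left hne12)
  have hq22 : Incid q2 L2 := (incid_iff _ _).mpr (cross_orthogonal_right hne12)
  have h2le : 2 ≤ linesThrough A q2 := two_le_linesThrough hL1 hL2 hne12 hq21 hq22
  have hq20 : Incid q2 L0 := hcon q2 h2le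
  have heq : q = q2 ∨ L0 = L1 :=
    eq_or_eq_of_orthogonal ((incid_iff _ _).mp hq0) ((incid_iff _ _).mp hq20)
      ((incid_iff _ _).mp hq1) ((incid_iff _ _).mp hq21)
  have hqq : q = q2 := heq.resolve_right (Ne.symm hne)
  rw [hqq]; exact hq22

open Projectivization Configuration.ofField in
lemma debruijn {k : Type*} [Field k] (A : Finset (ProjPlane k))
    (hd : 2 ≤ A.card) (hA : ¬ IsTrivial A) :
    A.card ≤ ∑ m ∈ Finset.Icc 2 A.card, tm A m := by
  classical
  set S : Set (ProjPlane k) := {p | 2 ≤ linesThrough A p} with hSdef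
  -- choose two distinct lines through each point of S
  have hex : ∀ p : S, ∃ q : ({L // L ∈ A} × {L // L ∈ A}),
      q.1.1 ≠ q.2.1 ∧ Incid p.1 q.1.1 ∧ Incid p.1 q.2.1 := by
    rintro ⟨p, hp⟩
    have h2 : 1 < ({L : ProjPlane k | L ∈ A ∧ Incid p L}).ncard := hp
    obtain ⟨L₁, L₂, hm1, hm2, hne⟩ := (Set.one_lt_ncard_iff (linesSet_finite A p)).mp h2
    exact ⟨⟨⟨L₁, hm1.1⟩, ⟨L₂, hm2.1⟩⟩, hne, hm1.2, hm2.2⟩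
  choose f hf1 hf2 hf3 using hex
  have hinj : Function.Injective f := by
    intro x y hxy
    have h1 := hf2 x
    have h2 := hf3 x
    have h3 := hf2 y
    have h4 := hf3 y
    rw [hxy] at h1 h2
    have := eq_or_eq_of_orthogonal ((incid_iff _ _).mp h3) ((incid_iff _ _).mp h1)
      ((incid_iff _ _).mp h4) ((incid_iff _ _).mp h2)
    rcases this with h | h
    · exact Subtype.ext h.symm
    · exact absurd h (hf1 y)
  have hfinS : S.Finite := by
    have : Finite S := Finite.of_injective f hinj
    exact Set.finite_coe_iff.mp this
  -- counting: |S| = ∑ tm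
  have hmem : ∀ p ∈ hfinS.toFinset, linesThrough A p ∈ Finset.Icc 2 A.card := by
    intro p hp
    rw [Set.Finite.mem_toFinset] at hp
    exact Finset.mem_Icc.mpr ⟨hp, linesThrough_le A p⟩
  have hcount : S.ncard = ∑ m ∈ Finset.Icc 2 A.card, tm A m := by
    rw [Set.ncard_eq_toFinset_card _ hfinS,
      Finset.card_eq_sum_card_fiberwise hmem]
    refine Finset.sum_congr rfl fun m hm => ?_
    rw [Finset.mem_Icc] at hm
    have hset : {p : ProjPlane k | linesThrough A p = m}
        = ↑(hfinS.toFinset.filter (fun p => linesThrough A p = m)) := by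
      ext p
      simp only [Set.mem_setOf_eq, Finset.coe_filter, Set.Finite.mem_toFinset]
      constructor
      · intro h; exact ⟨by rw [hSdef]; simp only [Set.mem_setOf_eq]; omega, h⟩
      · exact fun h => h.2
    rw [tm, hset, Set.ncard_coe_finset]
  -- de Bruijn–Erdős via Configuration
  letI memb : Membership {L // L ∈ A} S := ⟨fun (l : S) (p : {L // L ∈ A}) => Incid l.1 p.1⟩
  letI instP : Fintype {L // L ∈ A} := FinsetCoe.fintype A
  letI instL : Fintype S := hfinS.fintype
  letI hl : Configuration.HasLines {L // L ∈ A} S :=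
    { exists_point := by
        rintro ⟨l, hl2⟩
        rw [IsTrivial] at hA; push_neg at hA
        obtain ⟨L, hL, hnI⟩ := hA l
        exact ⟨⟨L, hL⟩, hnI⟩
      exists_line := by
        rintro ⟨L, hL⟩
        obtain ⟨p, hp2, hpn⟩ := exists_line_aux A hd hA hL
        exact ⟨⟨p, hp2⟩, hpn⟩
      eq_or_eq := by
        rintro ⟨L₁, h₁⟩ ⟨L₂, h₂⟩ ⟨p₁, hp₁⟩ ⟨p₂, hp₂⟩ m11 m21 m12 m22
        have o11 : L₁.orthogonal p₁ := orthogonal_comm.mp ((incid_iff _ _).mp (m11 : Incid p₁ L₁))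
        have o21 : L₂.orthogonal p₁ := orthogonal_comm.mp ((incid_iff _ _).mp (m21 : Incid p₁ L₂))
        have o12 : L₁.orthogonal p₂ := orthogonal_comm.mp ((incid_iff _ _).mp (m12 : Incid p₂ L₁))
        have o22 : L₂.orthogonal p₂ := orthogonal_comm.mp ((incid_iff _ _).mp (m22 : Incid p₂ L₂))
        rcases eq_or_eq_of_orthogonal o11 o21 o12 o22 with h | h
        · exact Or.inl (Subtype.ext h)
        · exact Or.inr (Subtype.ext h)
      mkLine := fun {p₁ p₂} h =>
        ⟨Projectivization.cross p₁.1 p₂.1, by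
          have hne : p₁.1 ≠ p₂.1 := fun e => h (Subtype.ext e)
          exact two_le_linesThrough p₁.2 p₂.2 hne
            ((incid_iff _ _).mpr (cross_orthogonal_left hne))
            ((incid_iff _ _).mpr (cross_orthogonal_right hne))⟩
      mkLine_ax := fun {p₁ p₂} h => by
        have hne : p₁.1 ≠ p₂.1 := fun e => h (Subtype.ext e)
        exact ⟨(incid_iff _ _).mpr (cross_orthogonal_left hne),
          (incid_iff _ _).mpr (cross_orthogonal_right hne)⟩ }
  have hcard := @Configuration.HasLines.card_le {L // L ∈ A} S memb hl instP instL
  rw [Fintype.card_coe] at hcard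
  have : Fintype.card S = S.ncard := by
    rw [← Nat.card_eq_fintype_card, Nat.card_coe_set_eq]
  omega

/-- For any arrangement of `d` lines, `c̄₁² - 3 c̄₂ = d - Σ_{m≥2} t_m`;
consequently, for a nontrivial arrangement, `c̄₁² ≤ 3 c̄₂`. -/
theorem stmt_11 {k : Type*} [Field k] (A : Finset (ProjPlane k))
    (hd : 2 ≤ A.card) :
    c1sq A - 3 * c2 A =
      (A.card : ℤ) - ∑ m ∈ Finset.Icc 2 A.card, (tm A m : ℤ) ∧
    (¬ IsTrivial A → c1sq A ≤ 3 * c2 A) := by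
  have hsum : ∑ m ∈ Finset.Icc 2 A.card, (3 * (m : ℤ) - 4) * (tm A m : ℤ)
      = 3 * (∑ m ∈ Finset.Icc 2 A.card, ((m : ℤ) - 1) * (tm A m : ℤ))
        - ∑ m ∈ Finset.Icc 2 A.card, (tm A m : ℤ) := by
    rw [Finset.mul_sum, ← Finset.sum_sub_distrib]
    exact Finset.sum_congr rfl fun m _ => by ring
  have h1 : c1sq A - 3 * c2 A
      = (A.card : ℤ) - ∑ m ∈ Finset.Icc 2 A.card, (tm A m : ℤ) := by
    simp only [c1sq, c2]; linarith
  refine ⟨h1, fun hA => ?_⟩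
  have hdb := debruijn A hd hA
  have hZ : (A.card : ℤ) ≤ ∑ m ∈ Finset.Icc 2 A.card, (tm A m : ℤ) := by
    exact_mod_cast hdb
  linarith
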